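/- Let v₀ ∈ L²(ℝ³; ℝ³) and R₀ > 0. Then there exists a constant c > 0, depending only on R₀, such that for all t > 0 and all x ∈ ℝ³ with |x| > 2R₀, ∫_{|y| < R₀} H(t, x-y) |v₀(y)| dy ≤ c ‖v₀‖_{L²} (|x| + t^{1/2})^{-3}. -/

import Mathlib

open MeasureTheory

/-- The heat kernel on `ℝ³`. -/
noncomputable def heatKernel (s : ℝ) (z : EuclideanSpace ℝ (Fin 3)) : ℝ :=
  (4 * Real.pi * s) ^ (-(3:ℝ)/2) * Real.exp (-‖z‖ ^ 2 / (4 * s))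

lemma key_ineq (r s : ℝ) (hr : 0 < r) (hs : 0 < s) :
    (r + s) ^ 3 ≤ 8192 * s ^ 3 * Real.exp (r ^ 2 / (16 * s ^ 2)) := by
  set B : ℝ := r ^ 2 / (16 * s ^ 2) with hB
  have hBnn : 0 ≤ B := by positivity
  have h2 : Real.exp (B / 2) ^ 2 = Real.exp B := by
    rw [sq, ← Real.exp_add]; ring_nf
  have h1 : B / 2 + 1 ≤ Real.exp (B / 2) := by
    simpa [add_comm] using Real.add_one_le_exp (B / 2)
  have h3 : (B / 2) ^ 2 ≤ Real.exp B := by nlinarith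
  rcases le_total r s with h | h
  · have he : 1 ≤ Real.exp B := Real.one_le_exp hBnn
    have h8 : (r + s) ^ 3 ≤ 8 * s ^ 3 := by
      nlinarith [pow_le_pow_left₀ hr.le h 3, mul_le_mul_of_nonneg_right
        (pow_le_pow_left₀ hr.le h 2) hs.le, mul_le_mul_of_nonneg_right h
        (mul_pos hs hs).le, sq_nonneg s]
    have h9 : 8 * s ^ 3 ≤ 8192 * s ^ 3 * Real.exp B := by nlinarith [pow_pos hs 3]
    linarith
  · calc (r + s) ^ 3 ≤ 8 * r ^ 4 / s := by
          rw [le_div_iff₀ hs]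
          have h8 : (r + s) ^ 3 ≤ 8 * r ^ 3 := by
            nlinarith [pow_le_pow_left₀ hs.le h 3, mul_le_mul_of_nonneg_right
              (pow_le_pow_left₀ hs.le h 2) hr.le, mul_le_mul_of_nonneg_right h
              (mul_pos hr hr).le, sq_nonneg r]
          have h9 : (r + s) ^ 3 * s ≤ 8 * r ^ 3 * s := by
            exact mul_le_mul_of_nonneg_right h8 hs.le
          have h10 : 8 * r ^ 3 * s ≤ 8 * r ^ 4 := by
            nlinarith [mul_nonneg (pow_pos hr 3).le (sub_nonneg.2 h)]
          linarith
      _ = 8192 * s ^ 3 * (r ^ 4 / (1024 * s ^ 4)) := by field_simp; ring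
      _ ≤ 8192 * s ^ 3 * Real.exp B := by
          have hb2 : (B / 2) ^ 2 = r ^ 4 / (1024 * s ^ 4) := by
            rw [hB]; field_simp; ring
          rw [← hb2]
          exact mul_le_mul_of_nonneg_left h3 (by positivity)

lemma kernel_bound (t : ℝ) (ht : 0 < t) (r : ℝ) (hr : 0 < r) :
    (4 * Real.pi * t) ^ (-(3:ℝ)/2) * Real.exp (-r ^ 2 / (16 * t)) ≤
      8192 * (r + t ^ ((1:ℝ)/2)) ^ (-(3:ℝ)) := by
  set s : ℝ := t ^ ((1:ℝ)/2) with hsdef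
  have hs : 0 < s := Real.rpow_pos_of_pos ht _
  have hst : s ^ 2 = t := by
    rw [hsdef, ← Real.rpow_natCast (t ^ ((1:ℝ)/2)) 2, ← Real.rpow_mul ht.le]
    norm_num
  have hA : 0 < r + s := by positivity
  have hP : 0 < 4 * Real.pi * t := by positivity
  have hpow1 : (r + s) ^ (-(3:ℝ)) = ((r + s) ^ (3:ℕ))⁻¹ := by
    rw [Real.rpow_neg hA.le, show ((3:ℝ)) = ((3:ℕ):ℝ) from by norm_num, Real.rpow_natCast]
  have hpow2 : (4 * Real.pi * t) ^ (-(3:ℝ)/2) = ((4 * Real.pi * t) ^ ((3:ℝ)/2))⁻¹ := by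
    rw [neg_div, Real.rpow_neg hP.le]
  have hPs : s ^ 3 ≤ (4 * Real.pi * t) ^ ((3:ℝ)/2) := by
    have h1 : t ≤ 4 * Real.pi * t := by nlinarith [Real.pi_gt_three]
    have h2 : t ^ ((3:ℝ)/2) ≤ (4 * Real.pi * t) ^ ((3:ℝ)/2) :=
      Real.rpow_le_rpow ht.le h1 (by norm_num)
    calc s ^ 3 = t ^ ((3:ℝ)/2) := by
          rw [hsdef, ← Real.rpow_natCast (t ^ ((1:ℝ)/2)) 3, ← Real.rpow_mul ht.le]
          norm_num
      _ ≤ _ := h2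
  have hB : -r ^ 2 / (16 * t) = -(r ^ 2 / (16 * s ^ 2)) := by
    rw [hst]; ring
  rw [hB, Real.exp_neg, hpow1, hpow2, ← mul_inv]
  have hkey : (r + s) ^ 3 ≤ 8192 * ((4 * Real.pi * t) ^ ((3:ℝ)/2) *
      Real.exp (r ^ 2 / (16 * s ^ 2))) := by
    calc (r + s) ^ 3 ≤ 8192 * s ^ 3 * Real.exp (r ^ 2 / (16 * s ^ 2)) := key_ineq r s hr hs
      _ ≤ _ := by
          rw [mul_assoc]
          exact mul_le_mul_of_nonneg_left
            (mul_le_mul_of_nonneg_right hPs (Real.exp_pos _).le) (by norm_num)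
  have heq : 8192 * ((r + s) ^ (3:ℕ))⁻¹ = ((r + s) ^ (3:ℕ) / 8192)⁻¹ := by
    rw [inv_div]; ring
  rw [heq]
  apply inv_anti₀ (by positivity)
  rw [div_le_iff₀ (by norm_num : (0:ℝ) < 8192)]
  linarith [hkey]

theorem stmt_6 (R₀ : ℝ) (hR₀ : 0 < R₀) :
    ∃ c > 0, ∀ v₀ : EuclideanSpace ℝ (Fin 3) → EuclideanSpace ℝ (Fin 3),
      MemLp v₀ 2 volume →
      ∀ t : ℝ, 0 < t → ∀ x : EuclideanSpace ℝ (Fin 3), 2 * R₀ < ‖x‖ →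
        (∫ y in Metric.ball (0 : EuclideanSpace ℝ (Fin 3)) R₀,
            heatKernel t (x - y) * ‖v₀ y‖) ≤
          c * (eLpNorm v₀ 2 volume).toReal * (‖x‖ + t ^ ((1:ℝ)/2)) ^ (-(3:ℝ)) := by
  set E := EuclideanSpace ℝ (Fin 3)
  set S : Set E := Metric.ball (0 : E) R₀ with hS
  have hSmeas : MeasurableSet S := measurableSet_ball
  have hSfin : volume S < ⊤ := measure_ball_lt_top
  set M : ℝ := (volume S).toReal ^ ((1:ℝ)/2) with hM
  have hMnn : 0 ≤ M := Real.rpow_nonneg ENNReal.toReal_nonneg _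
  refine ⟨8192 * M + 1, by positivity, ?_⟩
  intro v₀ hv₀ t ht x hx
  have hxpos : 0 < ‖x‖ := lt_trans (by positivity) hx
  set N : ℝ := (eLpNorm v₀ 2 volume).toReal with hN
  have hNnn : 0 ≤ N := ENNReal.toReal_nonneg
  set K : ℝ := (4 * Real.pi * t) ^ (-(3:ℝ)/2) * Real.exp (-‖x‖ ^ 2 / (16 * t)) with hK
  have hKnn : 0 ≤ K := by
    apply mul_nonneg (Real.rpow_nonneg (by positivity) _) (Real.exp_pos _).le
  -- pointwise bound of the heat kernel on the ball
  have hpt : ∀ y ∈ S, heatKernel t (x - y) ≤ K := by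
    intro y hy
    have hy' : ‖y‖ < R₀ := by rw [hS] at hy; exact mem_ball_zero_iff.mp hy
    have hd : ‖x‖ / 2 ≤ ‖x - y‖ := by
      have := norm_sub_norm_le x y
      linarith
    have hd2 : ‖x‖ ^ 2 / 4 ≤ ‖x - y‖ ^ 2 := by nlinarith [norm_nonneg (x - y)]
    have hexp : Real.exp (-‖x - y‖ ^ 2 / (4 * t)) ≤ Real.exp (-‖x‖ ^ 2 / (16 * t)) := by
      apply Real.exp_le_exp.2
      rw [div_le_div_iff₀ (by positivity) (by positivity)]
      nlinarith
    exact mul_le_mul_of_nonneg_left hexp (Real.rpow_nonneg (by positivity) _)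
  -- integrability of the dominating function
  have hvS : MemLp v₀ 2 (volume.restrict S) := hv₀.restrict S
  haveI : Fact (volume S < ⊤) := ⟨hSfin⟩
  have hvInt : Integrable v₀ (volume.restrict S) := hvS.integrable one_le_two
  have hInt : Integrable (fun y => K * ‖v₀ y‖) (volume.restrict S) :=
    (hvInt.norm.const_mul K)
  -- step 1 : compare integrals
  have step1 : (∫ y in S, heatKernel t (x - y) * ‖v₀ y‖) ≤ ∫ y in S, K * ‖v₀ y‖ := by
    apply integral_mono_of_nonneg
    · apply ae_of_all
      intro y
      unfold heatKernel
      positivity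
    · exact hInt
    · rw [Filter.EventuallyLE, ae_restrict_iff' hSmeas]
      apply ae_of_all
      intro y hy
      exact mul_le_mul_of_nonneg_right (hpt y hy) (norm_nonneg _)
  have step2 : (∫ y in S, K * ‖v₀ y‖) = K * ∫ y in S, ‖v₀ y‖ := integral_const_mul K _
  -- step 3 : Cauchy-Schwarz bound on the L¹ norm
  have step3 : (∫ y in S, ‖v₀ y‖) ≤ N * M := by
    have hmeas : AEStronglyMeasurable v₀ (volume.restrict S) :=
      hv₀.aestronglyMeasurable.restrict
    have h1 : (∫ y in S, ‖v₀ y‖) = (∫⁻ y in S, ‖v₀ y‖₊).toReal :=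
      integral_norm_eq_lintegral_enorm hmeas
    have h2 : (∫⁻ y in S, ‖v₀ y‖₊) = eLpNorm v₀ 1 (volume.restrict S) :=
      (eLpNorm_one_eq_lintegral_enorm (f := v₀) (μ := volume.restrict S)).symm
    have h3 : eLpNorm v₀ 1 (volume.restrict S) ≤
        eLpNorm v₀ 2 (volume.restrict S) * (volume.restrict S) Set.univ ^
          (1 / (1:ENNReal).toReal - 1 / (2:ENNReal).toReal) :=
      eLpNorm_le_eLpNorm_mul_rpow_measure_univ (by norm_num) hmeas
    have h4 : eLpNorm v₀ 2 (volume.restrict S) ≤ eLpNorm v₀ 2 volume :=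
      eLpNorm_mono_measure _ Measure.restrict_le_self
    have h5 : (volume.restrict S) Set.univ = volume S := by
      simp [Measure.restrict_apply_univ]
    have h6 : eLpNorm v₀ 1 (volume.restrict S) ≤
        eLpNorm v₀ 2 volume * (volume S) ^ ((1:ℝ)/2) := by
      refine h3.trans ?_
      rw [h5]
      have : (1 / (1:ENNReal).toReal - 1 / (2:ENNReal).toReal) = (1:ℝ)/2 := by norm_num
      rw [this]
      exact mul_le_mul_left h4 _
    have hfin : eLpNorm v₀ 2 volume * (volume S) ^ ((1:ℝ)/2) ≠ ⊤ := by
      apply ENNReal.mul_ne_top hv₀.2.ne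
      exact (ENNReal.rpow_lt_top_of_nonneg (by norm_num) hSfin.ne).ne
    calc (∫ y in S, ‖v₀ y‖) = (eLpNorm v₀ 1 (volume.restrict S)).toReal := by rw [h1, h2]
      _ ≤ (eLpNorm v₀ 2 volume * (volume S) ^ ((1:ℝ)/2)).toReal := ENNReal.toReal_mono hfin h6
      _ = N * M := by
          rw [ENNReal.toReal_mul, hN, hM, ENNReal.toReal_rpow]
  -- step 4 : kernel bound
  have step4 : K ≤ 8192 * (‖x‖ + t ^ ((1:ℝ)/2)) ^ (-(3:ℝ)) := kernel_bound t ht ‖x‖ hxpos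
  have hAnn : 0 ≤ (‖x‖ + t ^ ((1:ℝ)/2)) ^ (-(3:ℝ)) :=
    Real.rpow_nonneg (by positivity) _
  calc (∫ y in S, heatKernel t (x - y) * ‖v₀ y‖) ≤ K * ∫ y in S, ‖v₀ y‖ := by
        rw [← step2]; exact step1
    _ ≤ K * (N * M) := by
        apply mul_le_mul_of_nonneg_left step3 hKnn
    _ ≤ (8192 * (‖x‖ + t ^ ((1:ℝ)/2)) ^ (-(3:ℝ))) * (N * M) :=
        mul_le_mul_of_nonneg_right step4 (by positivity)
    _ ≤ (8192 * M + 1) * N * (‖x‖ + t ^ ((1:ℝ)/2)) ^ (-(3:ℝ)) := by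
        nlinarith [mul_nonneg hNnn hMnn, mul_nonneg hNnn hAnn,
          mul_nonneg (mul_nonneg hNnn hMnn) hAnn]
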